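/- Let F be a finite-dimensional complex Hilbert space with a Frobenius algebra structure (μ, η, Δ, ε) such that μ† = Δ and η† = ε (a †-Frobenius algebra). Set ζ := μ∘Δ : F → F. Then ζ is a self-adjoint F-F-bimodule morphism, ζ is injective (0 is not an eigenvalue), and the eigenspace decomposition F = ⊕_{α ∈ sp(ζ)} F_α is a decomposition of Frobenius algebras: for a ∈ F_α, b ∈ F_β with α ≠ β one has a·b = 0, and Δ(F_α) ⊆ F_α ⊗ F_α. Consequently F is a semisimple algebra. -/

import Mathlib

open scoped TensorProduct
open LinearMap

section Aux

variable {F : Type*} [Ring F] [Algebra ℂ F]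

private lemma aux_rT_mul (f : F →ₗ[ℂ] F) (hf : ∀ a b : F, f (a * b) = f a * b) :
    ∀ v : F ⊗[ℂ] F, mul' ℂ F (rTensor F f v) = f (mul' ℂ F v) := by
  have h : (mul' ℂ F) ∘ₗ rTensor F f = f ∘ₗ (mul' ℂ F) := by
    apply TensorProduct.ext'
    intro a b
    simp [hf]
  intro v
  exact congrArg (fun g => g v) h

private lemma aux_lT_mul (f : F →ₗ[ℂ] F) (hf : ∀ a b : F, f (a * b) = a * f b) :
    ∀ v : F ⊗[ℂ] F, mul' ℂ F (lTensor F f v) = f (mul' ℂ F v) := by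
  have h : (mul' ℂ F) ∘ₗ lTensor F f = f ∘ₗ (mul' ℂ F) := by
    apply TensorProduct.ext'
    intro a b
    simp [hf]
  intro v
  exact congrArg (fun g => g v) h

private lemma aux_assoc_l (a : F) :
    (rTensor F (mul' ℂ F)) ∘ₗ ((TensorProduct.assoc ℂ F F F).symm.toLinearMap
      ∘ₗ (TensorProduct.mk ℂ F (F ⊗[ℂ] F) a))
    = rTensor F (mulLeft ℂ a) := by
  apply TensorProduct.ext'
  intro c d
  simp

private lemma aux_assoc_r (a : F) :
    (lTensor F (mul' ℂ F)) ∘ₗ ((TensorProduct.assoc ℂ F F F).toLinearMap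
      ∘ₗ ((TensorProduct.mk ℂ (F ⊗[ℂ] F) F).flip a))
    = lTensor F (mulRight ℂ a) := by
  apply TensorProduct.ext'
  intro c d
  simp

private lemma aux_swap (g h : F →ₗ[ℂ] F) (u : F ⊗[ℂ] F) :
    lTensor F g (rTensor F h u) = rTensor F h (lTensor F g u) := by
  rw [← LinearMap.comp_apply, ← LinearMap.comp_apply, lTensor_comp_rTensor,
    rTensor_comp_lTensor]

/-- Semisimplicity from the separability data. -/
private theorem aux_ss {F : Type*} [Ring F] [Algebra ℂ F] [FiniteDimensional ℂ F]
    (Δ : F →ₗ[ℂ] F ⊗[ℂ] F)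
    (hΔl : ∀ a x : F, Δ (a * x) = rTensor F (mulLeft ℂ a) (Δ x))
    (hΔr : ∀ a x : F, Δ (x * a) = lTensor F (mulRight ℂ a) (Δ x))
    (hker : ∀ x : F, mul' ℂ F (Δ x) = 0 → x = 0) :
    IsSemisimpleRing F := by
  classical
  set ζ : F →ₗ[ℂ] F := (mul' ℂ F).comp Δ with hζdef
  have hζap : ∀ x, ζ x = mul' ℂ F (Δ x) := fun _ => rfl
  have hζl : ∀ a x : F, ζ (a * x) = a * ζ x := by
    intro a x
    rw [hζap, hζap, hΔl a x,
      aux_rT_mul (mulLeft ℂ a) (fun p q => by simp [mul_assoc]) (Δ x), mulLeft_apply]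
  have hζr : ∀ a x : F, ζ (x * a) = ζ x * a := by
    intro a x
    rw [hζap, hζap, hΔr a x,
      aux_lT_mul (mulRight ℂ a) (fun p q => by simp [mul_assoc]) (Δ x), mulRight_apply]
  have hinj : Function.Injective ζ := by
    intro x y h
    have h0 : ζ (x - y) = 0 := by rw [map_sub, h, sub_self]
    exact sub_eq_zero.mp (hker _ h0)
  have hsurj := LinearMap.injective_iff_surjective.mp hinj
  let Z : F ≃ₗ[ℂ] F := LinearEquiv.ofBijective ζ ⟨hinj, hsurj⟩
  let ζi : F →ₗ[ℂ] F := Z.symm.toLinearMap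
  have hζiζ : ∀ x, ζi (ζ x) = x := fun x => Z.symm_apply_apply x
  have hζζi : ∀ x, ζ (ζi x) = x := fun x => Z.apply_symm_apply x
  have hζil : ∀ a x : F, ζi (a * x) = a * ζi x := by
    intro a x
    obtain ⟨y, rfl⟩ := hsurj x
    rw [hζiζ, ← hζl, hζiζ]
  have hcompid : ζ.comp ζi = LinearMap.id := by
    ext x; exact hζζi x
  set e : F ⊗[ℂ] F := rTensor F ζi (Δ 1) with he
  have hμe : mul' ℂ F e = 1 := by
    apply hinj
    have h1 : rTensor F ζ (rTensor F ζi (Δ 1)) = Δ 1 := by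
      rw [← LinearMap.comp_apply, ← rTensor_comp, hcompid, rTensor_id,
        LinearMap.id_apply]
    calc ζ (mul' ℂ F e)
        = mul' ℂ F (rTensor F ζ (rTensor F ζi (Δ 1))) :=
          (aux_rT_mul ζ (fun p q => (hζr q p).symm ▸ rfl) _).symm
      _ = mul' ℂ F (Δ 1) := by rw [h1]
      _ = ζ 1 := rfl
  have hbal : ∀ a : F, rTensor F (mulLeft ℂ a) e = lTensor F (mulRight ℂ a) e := by
    intro a
    have hΔ1 : rTensor F (mulLeft ℂ a) (Δ 1) = lTensor F (mulRight ℂ a) (Δ 1) := by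
      rw [← hΔl a 1, ← hΔr a 1, mul_one, one_mul]
    have hcomm : (mulLeft ℂ a).comp ζi = ζi.comp (mulLeft ℂ a) := by
      ext x
      simp only [LinearMap.comp_apply, mulLeft_apply]
      exact (hζil a x).symm
    calc rTensor F (mulLeft ℂ a) e
        = rTensor F ((mulLeft ℂ a).comp ζi) (Δ 1) := by rw [rTensor_comp, he]; rfl
      _ = rTensor F (ζi.comp (mulLeft ℂ a)) (Δ 1) := by rw [hcomm]
      _ = rTensor F ζi (rTensor F (mulLeft ℂ a) (Δ 1)) := by rw [rTensor_comp]; rfl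
      _ = rTensor F ζi (lTensor F (mulRight ℂ a) (Δ 1)) := by rw [hΔ1]
      _ = lTensor F (mulRight ℂ a) e := by rw [he, aux_swap]
  refine (isSemisimpleModule_iff ..).mpr ⟨?_⟩
  intro I
  obtain ⟨J, hJ⟩ := Submodule.exists_isCompl (I.restrictScalars ℂ)
  set π : F →ₗ[ℂ] F :=
    (I.restrictScalars ℂ).subtype ∘ₗ ((I.restrictScalars ℂ).linearProjOfIsCompl J hJ)
    with hπ
  have hπmem : ∀ x : F, π x ∈ I :=
    fun x => (((I.restrictScalars ℂ).linearProjOfIsCompl J hJ) x).2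
  have hπid : ∀ x : F, x ∈ I → π x = x := by
    intro x hx
    have h := Submodule.linearProjOfIsCompl_apply_left hJ
      (⟨x, hx⟩ : I.restrictScalars ℂ)
    calc π x = ((((I.restrictScalars ℂ).linearProjOfIsCompl J hJ)) x : F) := rfl
      _ = x := congrArg Subtype.val h
  set Tf : F → F := fun x => mul' ℂ F (lTensor F (π ∘ₗ mulRight ℂ x) e) with hTf
  have hTmem : ∀ x : F, Tf x ∈ I := by
    intro x
    have key : ∀ u : F ⊗[ℂ] F, mul' ℂ F (lTensor F (π ∘ₗ mulRight ℂ x) u) ∈ I := by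
      intro u
      induction u using TensorProduct.induction_on with
      | zero => simpa using I.zero_mem
      | tmul p q =>
        simp only [lTensor_tmul, LinearMap.comp_apply, mul'_apply]
        have hmem := hπmem (mulRight ℂ x q)
        have : p * π (mulRight ℂ x q) = p • π (mulRight ℂ x q) := rfl
        rw [this]
        exact I.smul_mem p hmem
      | add u v hu hv =>
        rw [map_add, map_add]
        exact I.add_mem hu hv
    exact key e
  have hTadd : ∀ x y : F, Tf (x + y) = Tf x + Tf y := by
    intro x y
    have h1 : π ∘ₗ mulRight ℂ (x + y) = π ∘ₗ mulRight ℂ x + π ∘ₗ mulRight ℂ y := by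
      ext q; simp [mul_add]
    show mul' ℂ F (lTensor F (π ∘ₗ mulRight ℂ (x + y)) e) = _
    rw [h1, lTensor_add, LinearMap.add_apply, map_add]
  have hTmul : ∀ a x : F, Tf (a * x) = a * Tf x := by
    intro a x
    have h1 : π ∘ₗ mulRight ℂ (a * x) = (π ∘ₗ mulRight ℂ x) ∘ₗ mulRight ℂ a := by
      ext q; simp [mul_assoc]
    show mul' ℂ F (lTensor F (π ∘ₗ mulRight ℂ (a * x)) e) = _
    rw [h1, lTensor_comp, LinearMap.comp_apply, ← hbal a, aux_swap,
      aux_rT_mul (mulLeft ℂ a) (fun p q => by simp [mul_assoc]), mulLeft_apply]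
  let T : F →ₗ[F] F :=
    { toFun := Tf
      map_add' := hTadd
      map_smul' := by
        intro a x
        simp only [RingHom.id_apply, smul_eq_mul]
        exact hTmul a x }
  let f : F →ₗ[F] I := T.codRestrict I hTmem
  have hf : ∀ x : I, f x = x := by
    intro x
    apply Subtype.ext
    show Tf (x : F) = (x : F)
    have h1 : π ∘ₗ mulRight ℂ (x : F) = mulRight ℂ (x : F) := by
      ext q
      simp only [LinearMap.comp_apply, mulRight_apply]
      refine hπid _ ?_
      have := I.smul_mem q x.2
      rwa [smul_eq_mul] at this
    show mul' ℂ F (lTensor F (π ∘ₗ mulRight ℂ (x : F)) e) = (x : F)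
    rw [h1, aux_lT_mul (mulRight ℂ (x : F)) (fun p q => by simp [mul_assoc]),
      hμe, mulRight_apply, one_mul]
  exact ⟨_, LinearMap.isCompl_of_proj hf⟩

end Aux

theorem stmt13 {F : Type*} [Ring F] [Algebra ℂ F] [FiniteDimensional ℂ F]
    (B : F → F → ℂ)
    (hBlin : ∀ x : F, IsLinearMap ℂ (B x))
    (hBconj : ∀ x y : F, B y x = (starRingEnd ℂ) (B x y))
    (hBpos : ∀ x : F, x ≠ 0 → 0 < (B x x).re)
    (B2 : (F ⊗[ℂ] F) → (F ⊗[ℂ] F) → ℂ)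
    (hB2lin : ∀ u : F ⊗[ℂ] F, IsLinearMap ℂ (B2 u))
    (hB2conj : ∀ u v : F ⊗[ℂ] F, B2 v u = (starRingEnd ℂ) (B2 u v))
    (hB2elem : ∀ a b c d : F, B2 (a ⊗ₜ[ℂ] b) (c ⊗ₜ[ℂ] d) = B a c * B b d)
    (Δ : F →ₗ[ℂ] F ⊗[ℂ] F)
    (hΔadj : ∀ (x : F) (u : F ⊗[ℂ] F), B2 (Δ x) u = B x (LinearMap.mul' ℂ F u))
    (hfrob₁ : (LinearMap.lTensor F (LinearMap.mul' ℂ F)).comp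
        (((TensorProduct.assoc ℂ F F F).toLinearMap).comp (LinearMap.rTensor F Δ))
      = Δ.comp (LinearMap.mul' ℂ F))
    (hfrob₂ : (LinearMap.rTensor F (LinearMap.mul' ℂ F)).comp
        (((TensorProduct.assoc ℂ F F F).symm.toLinearMap).comp (LinearMap.lTensor F Δ))
      = Δ.comp (LinearMap.mul' ℂ F)) :
    (∀ x y : F, B ((LinearMap.mul' ℂ F) (Δ x)) y = B x ((LinearMap.mul' ℂ F) (Δ y))) ∧
    (∀ a x : F, (LinearMap.mul' ℂ F) (Δ (a * x)) = a * (LinearMap.mul' ℂ F) (Δ x) ∧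
      (LinearMap.mul' ℂ F) (Δ (x * a)) = (LinearMap.mul' ℂ F) (Δ x) * a) ∧
    Function.Injective (fun x : F => (LinearMap.mul' ℂ F) (Δ x)) ∧
    (∀ (α β : ℂ) (x y : F), (LinearMap.mul' ℂ F) (Δ x) = α • x →
      (LinearMap.mul' ℂ F) (Δ y) = β • y → α ≠ β → x * y = 0) ∧
    (∀ (α : ℂ) (x : F), (LinearMap.mul' ℂ F) (Δ x) = α • x →
      LinearMap.rTensor F ((LinearMap.mul' ℂ F).comp Δ) (Δ x) = α • Δ x ∧
      LinearMap.lTensor F ((LinearMap.mul' ℂ F).comp Δ) (Δ x) = α • Δ x) ∧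
    IsSemisimpleRing F := by
  classical
  -- conjugate-symmetry consequences for B
  have hBsmul₁ : ∀ (c : ℂ) (x y : F), B (c • x) y = (starRingEnd ℂ) c * B x y := by
    intro c x y
    rw [hBconj y (c • x), (hBlin y).map_smul, smul_eq_mul, map_mul, hBconj x y,
      Complex.conj_conj]
  have hBadd₁ : ∀ (x x' y : F), B (x + x') y = B x y + B x' y := by
    intro x x' y
    rw [hBconj y (x + x'), (hBlin y).map_add, map_add, ← hBconj y x, ← hBconj y x']
  have hB0r : ∀ x : F, B x 0 = 0 := fun x => (hBlin x).map_zero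
  have hB0l : ∀ x : F, B 0 x = 0 := fun x => by rw [hBconj x 0, hB0r]; simp
  have hBzz : ∀ x : F, x ≠ 0 → B x x ≠ 0 := by
    intro x hx h0
    have := hBpos x hx
    rw [h0] at this
    simp at this
  -- B2 sesquilinearity in the first argument
  have hB2smul₁ : ∀ (c : ℂ) (u v : F ⊗[ℂ] F), B2 (c • u) v = (starRingEnd ℂ) c * B2 u v := by
    intro c u v
    rw [hB2conj v (c • u), (hB2lin v).map_smul, smul_eq_mul, map_mul, hB2conj u v,
      Complex.conj_conj]
  have hB2add₁ : ∀ (u u' v : F ⊗[ℂ] F), B2 (u + u') v = B2 u v + B2 u' v := by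
    intro u u' v
    rw [hB2conj v (u + u'), (hB2lin v).map_add, map_add, ← hB2conj v u, ← hB2conj v u']
  have hB2zero₂ : ∀ u : F ⊗[ℂ] F, B2 u 0 = 0 := fun u => (hB2lin u).map_zero
  have hB2zero₁ : ∀ u : F ⊗[ℂ] F, B2 0 u = 0 := fun u => by
    rw [hB2conj u 0, hB2zero₂]; simp
  have hB2sub₁ : ∀ (u u' v : F ⊗[ℂ] F), B2 (u - u') v = B2 u v - B2 u' v := by
    intro u u' v
    have h := hB2add₁ (u - u') u' v
    rw [sub_add_cancel] at h
    exact eq_sub_of_add_eq h.symm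
  -- (1) self-adjointness of ζ
  have hsa : ∀ x y : F, B (LinearMap.mul' ℂ F (Δ x)) y = B x (LinearMap.mul' ℂ F (Δ y)) := by
    intro x y
    calc B (LinearMap.mul' ℂ F (Δ x)) y
        = (starRingEnd ℂ) (B y (LinearMap.mul' ℂ F (Δ x))) := hBconj y _
      _ = (starRingEnd ℂ) (B2 (Δ y) (Δ x)) := by rw [hΔadj y (Δ x)]
      _ = B2 (Δ x) (Δ y) := (hB2conj (Δ y) (Δ x)).symm
      _ = B x (LinearMap.mul' ℂ F (Δ y)) := hΔadj x (Δ y)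
  -- (2) Δ is a bimodule morphism
  have hΔl : ∀ a x : F, Δ (a * x) = rTensor F (mulLeft ℂ a) (Δ x) := by
    intro a x
    have h := congrArg (fun f => f (a ⊗ₜ[ℂ] x)) hfrob₂
    simp only [LinearMap.comp_apply, lTensor_tmul] at h
    have h2 := congrArg (fun f => f (Δ x)) (aux_assoc_l (F := F) a)
    simp only [LinearMap.comp_apply, TensorProduct.mk_apply] at h2
    have h3 : LinearMap.mul' ℂ F (a ⊗ₜ[ℂ] x) = a * x := by simp
    rw [h3] at h
    rw [← h, ← h2]
  have hΔr : ∀ a x : F, Δ (x * a) = lTensor F (mulRight ℂ a) (Δ x) := by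
    intro a x
    have h := congrArg (fun f => f (x ⊗ₜ[ℂ] a)) hfrob₁
    simp only [LinearMap.comp_apply, rTensor_tmul] at h
    have h2 := congrArg (fun f => f (Δ x)) (aux_assoc_r (F := F) a)
    simp only [LinearMap.comp_apply, LinearMap.flip_apply, TensorProduct.mk_apply] at h2
    have h3 : LinearMap.mul' ℂ F (x ⊗ₜ[ℂ] a) = x * a := by simp
    rw [h3] at h
    rw [← h, ← h2]
  have hζl : ∀ a x : F, LinearMap.mul' ℂ F (Δ (a * x)) = a * LinearMap.mul' ℂ F (Δ x) := by
    intro a x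
    rw [hΔl a x, aux_rT_mul (mulLeft ℂ a) (fun p q => by simp [mul_assoc]) (Δ x),
      mulLeft_apply]
  have hζr : ∀ a x : F, LinearMap.mul' ℂ F (Δ (x * a)) = LinearMap.mul' ℂ F (Δ x) * a := by
    intro a x
    rw [hΔr a x, aux_lT_mul (mulRight ℂ a) (fun p q => by simp [mul_assoc]) (Δ x),
      mulRight_apply]
  -- positive definiteness of B2 via an orthonormal basis for B
  let core : InnerProductSpace.Core ℂ F :=
  { inner := fun x y => B x y
    conj_inner_symm := fun x y => by
      show (starRingEnd ℂ) (B y x) = B x y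
      rw [hBconj x y, Complex.conj_conj]
    re_inner_nonneg := fun x => by
      by_cases hx : x = 0
      · subst hx
        show 0 ≤ (RCLike.re (B (0 : F) 0) : ℝ)
        rw [hB0l]
        simp
      · exact le_of_lt (hBpos x hx)
    add_left := fun x y z => hBadd₁ x y z
    smul_left := fun x y r => hBsmul₁ r x y
    definite := fun x hx => by
      by_contra hx0
      exact hBzz x hx0 hx }
  letI : NormedAddCommGroup F := core.toNormedAddCommGroup
  letI : InnerProductSpace ℂ F := InnerProductSpace.ofCore core.toCore
  let ob := stdOrthonormalBasis ℂ F
  have hob : ∀ i j, B (ob i) (ob j) = if i = j then 1 else 0 := by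
    have h := ob.orthonormal
    rw [orthonormal_iff_ite] at h
    exact h
  let B2' : (F ⊗[ℂ] F) →ₛₗ[starRingEnd ℂ] (F ⊗[ℂ] F) →ₗ[ℂ] ℂ :=
    LinearMap.mk₂'ₛₗ (starRingEnd ℂ) (RingHom.id ℂ) B2
      (fun u u' v => hB2add₁ u u' v)
      (fun c u v => hB2smul₁ c u v)
      (fun u v v' => (hB2lin u).map_add v v')
      (fun c u v => (hB2lin u).map_smul c v)
  have hB2'ap : ∀ u v, B2' u v = B2 u v := fun _ _ => rfl
  have hB2def : ∀ u : F ⊗[ℂ] F, B2 u u = 0 → u = 0 := by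
    intro u hu
    set bb := ob.toBasis.tensorProduct ob.toBasis with hbb
    set c : _ → ℂ := fun p => bb.repr u p with hc
    have hu' : u = ∑ p, c p • bb p := (bb.sum_repr u).symm
    have hBbb : ∀ p q, B2 (bb p) (bb q) = if p = q then 1 else 0 := by
      rintro ⟨i, j⟩ ⟨k, l⟩
      have h1 : bb (i, j) = ob i ⊗ₜ[ℂ] ob j := by
        simp [hbb, Module.Basis.tensorProduct_apply]
      have h2 : bb (k, l) = ob k ⊗ₜ[ℂ] ob l := by
        simp [hbb, Module.Basis.tensorProduct_apply]
      rw [h1, h2, hB2elem, hob, hob]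
      by_cases hik : i = k <;> by_cases hjl : j = l <;>
        simp [hik, hjl, Prod.ext_iff]
    have inner_eq : ∀ p, B2' (bb p) u = c p := by
      intro p
      conv_lhs => rw [hu']
      rw [map_sum]
      have hterm : ∀ q ∈ Finset.univ, B2' (bb p) (c q • bb q)
          = if q = p then c q else 0 := by
        intro q _
        rw [map_smul, smul_eq_mul, hB2'ap, hBbb p q]
        by_cases h : p = q
        · subst h; simp
        · simp [h, Ne.symm h]
      rw [Finset.sum_congr rfl hterm]
      simp
    have h1 : ∀ v, B2' u v = ∑ p, (starRingEnd ℂ) (c p) * B2' (bb p) v := by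
      intro v
      conv_lhs => rw [hu']
      rw [map_sum, LinearMap.sum_apply]
      refine Finset.sum_congr rfl fun p _ => ?_
      rw [map_smulₛₗ, LinearMap.smul_apply, smul_eq_mul]
    have key : B2 u u = ∑ p, (starRingEnd ℂ) (c p) * c p := by
      rw [← hB2'ap, h1 u]
      refine Finset.sum_congr rfl fun p _ => ?_
      rw [inner_eq p]
    rw [key] at hu
    have h2 : ((∑ p, Complex.normSq (c p) : ℝ) : ℂ) = 0 := by
      rw [Complex.ofReal_sum, ← hu]
      exact Finset.sum_congr rfl fun p _ => Complex.normSq_eq_conj_mul_self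
    have hre : ∑ p, Complex.normSq (c p) = 0 := by exact_mod_cast h2
    have hall : ∀ p ∈ Finset.univ, Complex.normSq (c p) = 0 := by
      rw [← Finset.sum_eq_zero_iff_of_nonneg (fun p _ => Complex.normSq_nonneg (c p))]
      exact hre
    have hc0 : ∀ p, c p = 0 := fun p =>
      Complex.normSq_eq_zero.mp (hall p (Finset.mem_univ p))
    rw [hu']
    simp [hc0]
  -- (3) injectivity
  have hker : ∀ x : F, LinearMap.mul' ℂ F (Δ x) = 0 → x = 0 := by
    intro x hx
    have h1 : B2 (Δ x) (Δ x) = 0 := by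
      rw [hΔadj x (Δ x), hx, hB0r]
    have h2 : Δ x = 0 := hB2def _ h1
    have h3 : B x x = 0 := by
      have h4 := hΔadj x (x ⊗ₜ[ℂ] (1 : F))
      rw [h2, hB2zero₁] at h4
      have h5 : LinearMap.mul' ℂ F (x ⊗ₜ[ℂ] (1 : F)) = x := by simp
      rw [h5] at h4
      exact h4.symm
    by_contra hx0
    exact hBzz x hx0 h3
  have hinj : Function.Injective (fun x : F => (LinearMap.mul' ℂ F) (Δ x)) := by
    intro x y h
    simp only at h
    have hz : LinearMap.mul' ℂ F (Δ (x - y)) = 0 := by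
      rw [map_sub, map_sub, h, sub_self]
    exact sub_eq_zero.mp (hker _ hz)
  -- (4) distinct eigenvalues multiply to zero
  have heigmul : ∀ (α β : ℂ) (x y : F), LinearMap.mul' ℂ F (Δ x) = α • x →
      LinearMap.mul' ℂ F (Δ y) = β • y → α ≠ β → x * y = 0 := by
    intro α β x y hx hy hne
    have h1 : LinearMap.mul' ℂ F (Δ (x * y)) = α • (x * y) := by
      rw [hζr y x, hx, smul_mul_assoc]
    have h2 : LinearMap.mul' ℂ F (Δ (x * y)) = β • (x * y) := by
      rw [hζl x y, hy, mul_smul_comm]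
    have h3 : (α - β) • (x * y) = 0 := by
      rw [sub_smul, ← h1, ← h2, sub_self]
    rcases smul_eq_zero.mp h3 with h | h
    · exact absurd (sub_eq_zero.mp h) hne
    · exact h
  -- (5) eigenspaces are mapped into their own tensor squares
  have heigsp : ∀ (α : ℂ) (x : F), LinearMap.mul' ℂ F (Δ x) = α • x →
      LinearMap.rTensor F ((LinearMap.mul' ℂ F).comp Δ) (Δ x) = α • Δ x ∧
      LinearMap.lTensor F ((LinearMap.mul' ℂ F).comp Δ) (Δ x) = α • Δ x := by
    intro α x hx
    have hrT_sa : ∀ u v, B2 (rTensor F ((LinearMap.mul' ℂ F).comp Δ) u) v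
        = B2 u (rTensor F ((LinearMap.mul' ℂ F).comp Δ) v) := by
      intro u v
      induction u using TensorProduct.induction_on with
      | zero => rw [map_zero, hB2zero₁, hB2zero₁]
      | tmul a b =>
        induction v using TensorProduct.induction_on with
        | zero => rw [map_zero, hB2zero₂, hB2zero₂]
        | tmul c d =>
          rw [rTensor_tmul, rTensor_tmul, LinearMap.comp_apply, LinearMap.comp_apply,
            hB2elem, hB2elem, hsa a c]
        | add v₁ v₂ ih₁ ih₂ =>
          rw [map_add, (hB2lin _).map_add, (hB2lin _).map_add, ih₁, ih₂]
      | add u₁ u₂ ih₁ ih₂ =>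
        rw [map_add, hB2add₁, hB2add₁, ih₁, ih₂]
    have hlT_sa : ∀ u v, B2 (lTensor F ((LinearMap.mul' ℂ F).comp Δ) u) v
        = B2 u (lTensor F ((LinearMap.mul' ℂ F).comp Δ) v) := by
      intro u v
      induction u using TensorProduct.induction_on with
      | zero => rw [map_zero, hB2zero₁, hB2zero₁]
      | tmul a b =>
        induction v using TensorProduct.induction_on with
        | zero => rw [map_zero, hB2zero₂, hB2zero₂]
        | tmul c d =>
          rw [lTensor_tmul, lTensor_tmul, LinearMap.comp_apply, LinearMap.comp_apply,
            hB2elem, hB2elem, hsa b d]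
        | add v₁ v₂ ih₁ ih₂ =>
          rw [map_add, (hB2lin _).map_add, (hB2lin _).map_add, ih₁, ih₂]
      | add u₁ u₂ ih₁ ih₂ =>
        rw [map_add, hB2add₁, hB2add₁, ih₁, ih₂]
    have hμrT : ∀ v, LinearMap.mul' ℂ F (rTensor F ((LinearMap.mul' ℂ F).comp Δ) v)
        = LinearMap.mul' ℂ F (Δ (LinearMap.mul' ℂ F v)) :=
      aux_rT_mul ((LinearMap.mul' ℂ F).comp Δ) (fun p q => by
        simp only [LinearMap.comp_apply]; exact hζr q p)
    have hμlT : ∀ v, LinearMap.mul' ℂ F (lTensor F ((LinearMap.mul' ℂ F).comp Δ) v)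
        = LinearMap.mul' ℂ F (Δ (LinearMap.mul' ℂ F v)) :=
      aux_lT_mul ((LinearMap.mul' ℂ F).comp Δ) (fun p q => by
        simp only [LinearMap.comp_apply]; exact hζl p q)
    have key : ∀ (T : (F ⊗[ℂ] F) →ₗ[ℂ] F ⊗[ℂ] F),
        (∀ u v, B2 (T u) v = B2 u (T v)) →
        (∀ v, LinearMap.mul' ℂ F (T v) = LinearMap.mul' ℂ F (Δ (LinearMap.mul' ℂ F v))) →
        T (Δ x) = α • Δ x := by
      intro T hTsa hTμ
      have hw : ∀ v, B2 (T (Δ x) - α • Δ x) v = 0 := by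
        intro v
        rw [hB2sub₁, hTsa, hB2smul₁, hΔadj, hΔadj, hTμ, ← hsa x (LinearMap.mul' ℂ F v),
          hx, hBsmul₁, sub_self]
      exact sub_eq_zero.mp (hB2def _ (hw (T (Δ x) - α • Δ x)))
    exact ⟨key _ hrT_sa hμrT, key _ hlT_sa hμlT⟩
  refine ⟨hsa, fun a x => ⟨hζl a x, hζr a x⟩, hinj, heigmul, heigsp, ?_⟩
  exact aux_ss Δ hΔl hΔr hker
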